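/- arXiv:1502.03191 — 6 statements merged into one kernel-verified Lean document; each statement's English description precedes it below -/
import Mathlib

section
/- Let P_L, P_R, B̂, T be unit vectors in ℝ³ with P_L, P_R, B̂ all orthogonal to T, with B̂ ⬝ P_L = B̂ ⬝ P_R > 0 and P_L ≠ P_R. Then the cross products P_L × P_R, P_L × B̂, and B̂ × P_R are all nonnegative multiples of one another; in particular the signs of (P_L × P_R) ⬝ T, (P_L × B̂) ⬝ T, and (B̂ × P_R) ⬝ T all coincide. -/
noncomputable section
open scoped RealInnerProductSpace
open Set

abbrev E3 := EuclideanSpace ℝ (Fin 3)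
abbrev E2 := EuclideanSpace ℝ (Fin 2)

def cross (u v : E3) : E3 :=
  (WithLp.equiv 2 (Fin 3 → ℝ)).symm ![u 1 * v 2 - u 2 * v 1, u 2 * v 0 - u 0 * v 2, u 0 * v 1 - u 1 * v 0]

lemma inner3 (u v : E3) : ⟪u,v⟫ = u 0*v 0 + u 1*v 1 + u 2*v 2 := by
  simp [PiLp.inner_apply, Fin.sum_univ_three, RCLike.inner_apply]; ring

lemma cross0 (u v : E3) : cross u v 0 = u 1 * v 2 - u 2 * v 1 := rfl
lemma cross1 (u v : E3) : cross u v 1 = u 2 * v 0 - u 0 * v 2 := rfl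
lemma cross2 (u v : E3) : cross u v 2 = u 0 * v 1 - u 1 * v 0 := rfl

lemma binet (a b c d : E3) :
    ⟪cross a b, cross c d⟫ = ⟪a,c⟫*⟪b,d⟫ - ⟪a,d⟫*⟪b,c⟫ := by
  simp only [inner3, cross0, cross1, cross2]; ring

lemma cross_eq_smul (u v T : E3) (hT : ‖T‖ = 1)
    (hu : ⟪u,T⟫ = 0) (hv : ⟪v,T⟫ = 0) :
    cross u v = ⟪cross u v, T⟫ • T := by
  have hTT : ⟪T,T⟫ = (1:ℝ) := by
    have := real_inner_self_eq_norm_sq T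
    rw [hT] at this; simpa using this
  simp only [inner3, cross0, cross1, cross2] at hu hv hTT
  rw [inner3, cross0, cross1, cross2]
  ext i
  fin_cases i <;> simp only [PiLp.smul_apply, smul_eq_mul]
  · show u 1 * v 2 - u 2 * v 1 =
      ((u 1 * v 2 - u 2 * v 1) * T 0 + (u 2 * v 0 - u 0 * v 2) * T 1 +
        (u 0 * v 1 - u 1 * v 0) * T 2) * T 0
    linear_combination (T 1*v 2 - T 2*v 1)*hu + (T 2*u 1 - T 1*u 2)*hv - (u 1*v 2 - u 2*v 1)*hTT
  · show u 2 * v 0 - u 0 * v 2 =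
      ((u 1 * v 2 - u 2 * v 1) * T 0 + (u 2 * v 0 - u 0 * v 2) * T 1 +
        (u 0 * v 1 - u 1 * v 0) * T 2) * T 1
    linear_combination (T 2*v 0 - T 0*v 2)*hu + (T 0*u 2 - T 2*u 0)*hv - (u 2*v 0 - u 0*v 2)*hTT
  · show u 0 * v 1 - u 1 * v 0 =
      ((u 1 * v 2 - u 2 * v 1) * T 0 + (u 2 * v 0 - u 0 * v 2) * T 1 +
        (u 0 * v 1 - u 1 * v 0) * T 2) * T 2
    linear_combination (T 0*v 1 - T 1*v 0)*hu + (T 1*u 0 - T 0*u 1)*hv - (u 0*v 1 - u 1*v 0)*hTT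

lemma sign_eq_of_mul_pos {p r : ℝ} (h : 0 < p * r) : Real.sign p = Real.sign r := by
  rcases lt_trichotomy p 0 with hp | hp | hp
  · have hr : r < 0 := by nlinarith
    rw [Real.sign_of_neg hp, Real.sign_of_neg hr]
  · rw [hp, zero_mul] at h; exact absurd h (lt_irrefl 0)
  · have hr : 0 < r := by nlinarith
    rw [Real.sign_of_pos hp, Real.sign_of_pos hr]

/-- with B̂ bisecting P_L and P_R, the cross products P_L × P_R,
P_L × B̂, B̂ × P_R are nonnegative multiples of one another, and the signs of
their dot products with T coincide. -/
theorem bisector_cross_products_aligned (PL PR Bh T : E3)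
    (hPL : ‖PL‖ = 1) (hPR : ‖PR‖ = 1) (hB : ‖Bh‖ = 1) (hT : ‖T‖ = 1)
    (hPLT : ⟪PL, T⟫ = 0) (hPRT : ⟪PR, T⟫ = 0) (hBT : ⟪Bh, T⟫ = 0)
    (heq : ⟪Bh, PL⟫ = ⟪Bh, PR⟫) (hpos : 0 < ⟪Bh, PL⟫) (hne : PL ≠ PR) :
    (∃ a : ℝ, 0 ≤ a ∧ cross PL Bh = a • cross PL PR) ∧
    (∃ b : ℝ, 0 ≤ b ∧ cross Bh PR = b • cross PL PR) ∧
    Real.sign ⟪cross PL Bh, T⟫ = Real.sign ⟪cross PL PR, T⟫ ∧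
    Real.sign ⟪cross Bh PR, T⟫ = Real.sign ⟪cross PL PR, T⟫ := by
  have hTT : ⟪T,T⟫ = (1:ℝ) := by
    have := real_inner_self_eq_norm_sq T; rw [hT] at this; simpa using this
  have hPP : ⟪PR,PR⟫ = (1:ℝ) := by
    have := real_inner_self_eq_norm_sq PR; rw [hPR] at this; simpa using this
  set c : ℝ := ⟪Bh, PL⟫ with hc
  set m : ℝ := ⟪PL, PR⟫ with hm
  set p : ℝ := ⟪cross PL Bh, T⟫ with hp
  set q : ℝ := ⟪cross Bh PR, T⟫ with hq
  set r : ℝ := ⟪cross PL PR, T⟫ with hr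
  have hA : cross PL Bh = p • T := cross_eq_smul PL Bh T hT hPLT hBT
  have hB2 : cross Bh PR = q • T := cross_eq_smul Bh PR T hT hBT hPRT
  have hC : cross PL PR = r • T := cross_eq_smul PL PR T hT hPLT hPRT
  have hBPL : ⟪PL, Bh⟫ = c := (real_inner_comm PL Bh).symm
  have hBPR : ⟪Bh, PR⟫ = c := heq.symm
  have hPRPL : ⟪PR, PL⟫ = m := (real_inner_comm PR PL).symm
  have hpr : p * r = c * (1 - m) := by
    have h1 : ⟪cross PL Bh, cross PL PR⟫ = ⟪PL,PL⟫*⟪Bh,PR⟫ - ⟪PL,PR⟫*⟪Bh,PL⟫ :=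
      binet PL Bh PL PR
    have hPLPL : ⟪PL,PL⟫ = (1:ℝ) := by
      have := real_inner_self_eq_norm_sq PL; rw [hPL] at this; simpa using this
    rw [hA, hC, real_inner_smul_left, real_inner_smul_right, hTT, hPLPL, hBPR,
      ← hm, ← hc] at h1
    ring_nf at h1 ⊢
    linarith [h1]
  have hqr : q * r = c * (1 - m) := by
    have h1 : ⟪cross Bh PR, cross PL PR⟫ = ⟪Bh,PL⟫*⟪PR,PR⟫ - ⟪Bh,PR⟫*⟪PR,PL⟫ :=
      binet Bh PR PL PR
    rw [hB2, hC, real_inner_smul_left, real_inner_smul_right, hTT, hPP, hBPR,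
      hPRPL, ← hc] at h1
    ring_nf at h1 ⊢
    linarith [h1]
  have hm1 : m < 1 := by
    have hle : m ≤ 1 := by
      have := real_inner_le_norm PL PR
      rw [hPL, hPR] at this; simpa [hm] using this
    rcases lt_or_eq_of_le hle with h | h
    · exact h
    · exact absurd ((inner_eq_one_iff_of_norm_eq_one hPL hPR).mp h) hne
  have hcm : 0 < c * (1 - m) := mul_pos hpos (by linarith)
  have hprpos : 0 < p * r := by rw [hpr]; exact hcm
  have hqrpos : 0 < q * r := by rw [hqr]; exact hcm
  have hrne : r ≠ 0 := by
    intro h; rw [h, mul_zero] at hprpos; exact lt_irrefl 0 hprpos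
  have hr2 : 0 < r * r := mul_self_pos.mpr hrne
  refine ⟨⟨p / r, ?_, ?_⟩, ⟨q / r, ?_, ?_⟩, sign_eq_of_mul_pos hprpos,
    sign_eq_of_mul_pos hqrpos⟩
  · have : p / r = (p * r) / (r * r) := by field_simp
    rw [this]; exact le_of_lt (div_pos hprpos hr2)
  · rw [hC, smul_smul, div_mul_cancel₀ _ hrne, ← hA]
  · have : q / r = (q * r) / (r * r) := by field_simp
    rw [this]; exact le_of_lt (div_pos hqrpos hr2)
  · rw [hC, smul_smul, div_mul_cancel₀ _ hrne, ← hB2]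
end
end

section
/- Let X : (0,ℓ) → ℝ³ be an arclength-parameterized C² curve with curvature K(s) > 0 and unit normal N(s), and let P : (0,ℓ) → ℝ³ be a unit vector field orthogonal to T(s) = X'(s) with B(s) ⬝ P(s) > 0 where B = T × N. Define the fold angle ρ(s) ∈ (−π, π) by cos ρ = P_L ⬝ P_R where P_L = P and P_R is the reflection of P_L across B in the plane orthogonal to T. If (K N) ⬝ (P_L × T) = k̂(s), then K(s) · cos(ρ(s)/2) = ±k̂(s); in particular |k̂(s)| ≤ K(s), with equality only when ρ(s) = 0. -/
noncomputable section
open scoped RealInnerProductSpace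
open Set

lemma cross_triple (u v w : E3) : ⟪w, cross u v⟫ = ⟪u, cross v w⟫ := by
  simp [cross, PiLp.inner_apply, Fin.sum_univ_three, PiLp.toLp_apply]
  ring

lemma cross_norm_sq (u v : E3) : ⟪cross u v, cross u v⟫ = ⟪u,u⟫*⟪v,v⟫ - ⟪u,v⟫^2 := by
  simp only [PiLp.inner_apply]; simp [cross, Fin.sum_univ_three, PiLp.toLp_apply]
  ring

/-- folding increases curvature: K cos(ρ/2) = ±k̂, so |k̂| ≤ K,
with equality only when the fold angle ρ is zero.  Here P_R is the reflection of
P_L across B in the plane orthogonal to T. -/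
theorem folding_increases_curvature (T N P : E3) (K ρ khat : ℝ)
    (hT : ‖T‖ = 1) (hN : ‖N‖ = 1) (hP : ‖P‖ = 1)
    (hNT : ⟪N, T⟫ = 0) (hPT : ⟪P, T⟫ = 0)
    (hK : 0 < K)
    (hBP : 0 < ⟪cross T N, P⟫)
    (hρ : ρ ∈ Ioo (-Real.pi) Real.pi)
    -- cos ρ = ⟪P_L, P_R⟫ with P_R the reflection of P_L := P across B = T × N
    (hcos : Real.cos ρ = ⟪P, (2 * ⟪P, cross T N⟫) • cross T N - P⟫)
    -- geodesic curvature: (K N) ⬝ (P_L × T) = k̂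
    (hgeo : ⟪K • N, cross P T⟫ = khat) :
    (K * Real.cos (ρ / 2) = khat ∨ K * Real.cos (ρ / 2) = -khat) ∧
    |khat| ≤ K ∧ (|khat| = K → ρ = 0) := by
  set B : E3 := cross T N with hB
  set b : ℝ := ⟪P, B⟫ with hb
  have hTT : ⟪T, T⟫ = 1 := by
    rw [real_inner_self_eq_norm_sq, hT]; norm_num
  have hNN : ⟪N, N⟫ = 1 := by
    rw [real_inner_self_eq_norm_sq, hN]; norm_num
  have hPP : ⟪P, P⟫ = 1 := by
    rw [real_inner_self_eq_norm_sq, hP]; norm_num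
  have hBB : ⟪B, B⟫ = 1 := by
    have hTN : ⟪T, N⟫ = 0 := by rw [real_inner_comm]; exact hNT
    rw [hB, cross_norm_sq, hTT, hNN, hTN]; norm_num
  have hnB : ‖B‖ = 1 := by
    have h := real_inner_self_eq_norm_sq B
    rw [hBB] at h
    nlinarith [norm_nonneg B]
  have hbpos : 0 < b := by
    rw [hb, real_inner_comm]; exact hBP
  have hble : b ≤ 1 := by
    calc b ≤ ‖P‖ * ‖B‖ := real_inner_le_norm P B
    _ = 1 := by rw [hP, hnB]; ring
  -- khat = K * b
  have hkhat : khat = K * b := by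
    rw [← hgeo, real_inner_smul_left, cross_triple P T N, ← hB, ← hb]
  -- cos ρ = 2 b^2 - 1
  have hcos2 : Real.cos ρ = 2 * b ^ 2 - 1 := by
    rw [hcos, inner_sub_right, real_inner_smul_right, hPP, ← hb]; ring
  -- cos (ρ/2) = b
  have hhalf : Real.cos (ρ / 2) = b := by
    have hsq : Real.cos (ρ / 2) ^ 2 = b ^ 2 := by
      have h := Real.cos_sq (ρ / 2)
      rw [show 2 * (ρ / 2) = ρ by ring, hcos2] at h
      rw [h]; ring
    have hpos : 0 < Real.cos (ρ / 2) := by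
      apply Real.cos_pos_of_mem_Ioo
      constructor <;> [linarith [hρ.1]; linarith [hρ.2]]
    nlinarith
  refine ⟨Or.inl (by rw [hhalf, hkhat]), ?_, ?_⟩
  · rw [hkhat, abs_of_pos (by positivity)]
    nlinarith
  · intro heq
    rw [hkhat, abs_of_pos (by positivity)] at heq
    have hb1 : b = 1 := mul_left_cancel₀ hK.ne' (heq.trans (mul_one K).symm)
    have : Real.cos (ρ / 2) = 1 := by rw [hhalf, hb1]
    have h0 : ρ / 2 = 0 := by
      rw [Real.cos_eq_one_iff_of_lt_of_lt] at this
      · exact this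
      · have := Real.pi_pos; linarith [hρ.1]
      · have := Real.pi_pos; linarith [hρ.2]
    linarith
end
end

section
/- Let r₁, r₂, t be unit vectors in ℝ² with −t, r₁, r₂, t in clockwise order around the origin, so that ∠(−t, t) = ∠(−t, r₁) + ∠(r₁, r₂) + ∠(r₂, t) = π. Let R₁, R₂, T be unit vectors in ℝ³ satisfying ∠(−T, R₁) ≤ ∠(−t, r₁), ∠(R₁, R₂) < ∠(r₁, r₂), and ∠(R₂, T) ≤ ∠(r₂, t). Then ∠(−T, R₁) + ∠(R₁, R₂) + ∠(R₂, T) < π, and hence (by the spherical triangle inequality ∠(−T, T) ≤ ∠(−T, R₁) + ∠(R₁, R₂) + ∠(R₂, T)) no such configuration exists, since ∠(−T, T) = π. -/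
noncomputable section
open scoped RealInnerProductSpace
open Set

private lemma sph_tri_aux {x y z : E3} (hx : ‖x‖ = 1) (hy : ‖y‖ = 1) (hz : ‖z‖ = 1) :
    Real.arccos ⟪x, z⟫ ≤ Real.arccos ⟪x, y⟫ + Real.arccos ⟪y, z⟫ := by
  set a := Real.arccos ⟪x, y⟫ with ha
  set b := Real.arccos ⟪y, z⟫ with hb
  by_cases hab : Real.pi ≤ a + b
  · exact le_trans (Real.arccos_le_pi _) hab
  push_neg at hab
  have hxy : |⟪x, y⟫| ≤ 1 := by
    simpa [hx, hy] using abs_real_inner_le_norm x y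
  have hyz : |⟪y, z⟫| ≤ 1 := by
    simpa [hy, hz] using abs_real_inner_le_norm y z
  have hxy1 := abs_le.mp hxy
  have hyz1 := abs_le.mp hyz
  have hcos : Real.cos (a + b) ≤ ⟪x, z⟫ := by
    rw [Real.cos_add, ha, hb, Real.cos_arccos hxy1.1 hxy1.2,
      Real.cos_arccos hyz1.1 hyz1.2, Real.sin_arccos, Real.sin_arccos]
    set u : E3 := x - ⟪x, y⟫ • y with hu
    set w : E3 := z - ⟪y, z⟫ • y with hw
    have hyy : ⟪y, y⟫ = (1:ℝ) := by
      rw [real_inner_self_eq_norm_sq, hy]; norm_num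
    have huw : ⟪u, w⟫ = ⟪x, z⟫ - ⟪x, y⟫ * ⟪y, z⟫ := by
      rw [hu, hw, inner_sub_left, inner_sub_right, inner_sub_right, real_inner_smul_left,
        real_inner_smul_left, real_inner_smul_right, real_inner_smul_right,
        hyy, real_inner_comm y x]
      ring
    have hxx : ⟪x, x⟫ = (1:ℝ) := by
      rw [real_inner_self_eq_norm_sq, hx]; norm_num
    have hzz : ⟪z, z⟫ = (1:ℝ) := by
      rw [real_inner_self_eq_norm_sq, hz]; norm_num
    have hnu : ‖u‖^2 = 1 - ⟪x, y⟫^2 := by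
      rw [← real_inner_self_eq_norm_sq, hu]
      rw [inner_sub_left, inner_sub_right, inner_sub_right, real_inner_smul_left,
        real_inner_smul_left, real_inner_smul_right, real_inner_smul_right,
        hyy, hxx, real_inner_comm y x]
      ring
    have hnw : ‖w‖^2 = 1 - ⟪y, z⟫^2 := by
      rw [← real_inner_self_eq_norm_sq, hw]
      rw [inner_sub_left, inner_sub_right, inner_sub_right, real_inner_smul_left,
        real_inner_smul_left, real_inner_smul_right, real_inner_smul_right,
        hyy, hzz, real_inner_comm z y]
      ring
    have hCS : -(‖u‖ * ‖w‖) ≤ ⟪u, w⟫ := neg_le_of_abs_le (abs_real_inner_le_norm u w)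
    have hprod : ‖u‖ * ‖w‖ = Real.sqrt (1 - ⟪x, y⟫^2) * Real.sqrt (1 - ⟪y, z⟫^2) := by
      rw [← hnu, ← hnw, Real.sqrt_sq (norm_nonneg u), Real.sqrt_sq (norm_nonneg w)]
    nlinarith [hCS, hprod, huw]
  have hm1 : (-1:ℝ) ≤ Real.cos (a + b) := Real.neg_one_le_cos _
  have hab0 : 0 ≤ a + b := add_nonneg (Real.arccos_nonneg _) (Real.arccos_nonneg _)
  calc Real.arccos ⟪x, z⟫ ≤ Real.arccos (Real.cos (a + b)) := by
        unfold Real.arccos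
        have := Real.monotone_arcsin hcos
        linarith
    _ = a + b := Real.arccos_cos hab0 hab.le

/-- a cone ruling forces a kink: if the 2D angles around the crease
point sum to π and folding weakly decreases the outer angles while strictly
decreasing the cone angle, the 3D angle sum is < π, contradicting the spherical
triangle inequality; no such configuration exists. -/
theorem cone_ruling_kink (t r₁ r₂ : E2) (T R₁ R₂ : E3)
    (ht : ‖t‖ = 1) (hr₁ : ‖r₁‖ = 1) (hr₂ : ‖r₂‖ = 1)
    (hT : ‖T‖ = 1) (hR₁ : ‖R₁‖ = 1) (hR₂ : ‖R₂‖ = 1)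
    (h2D : Real.arccos ⟪-t, r₁⟫ + Real.arccos ⟪r₁, r₂⟫ + Real.arccos ⟪r₂, t⟫
            = Real.pi)
    (h₁ : Real.arccos ⟪-T, R₁⟫ ≤ Real.arccos ⟪-t, r₁⟫)
    (h₂ : Real.arccos ⟪R₁, R₂⟫ < Real.arccos ⟪r₁, r₂⟫)
    (h₃ : Real.arccos ⟪R₂, T⟫ ≤ Real.arccos ⟪r₂, t⟫) :
    Real.arccos ⟪-T, R₁⟫ + Real.arccos ⟪R₁, R₂⟫ + Real.arccos ⟪R₂, T⟫
      < Real.pi ∧ False := by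
  have hsum : Real.arccos ⟪-T, R₁⟫ + Real.arccos ⟪R₁, R₂⟫ + Real.arccos ⟪R₂, T⟫
      < Real.pi := by linarith
  refine ⟨hsum, ?_⟩
  have hnT : ‖(-T : E3)‖ = 1 := by simpa using hT
  have h1 := sph_tri_aux hnT hR₂ hT
  have h2 := sph_tri_aux hnT hR₁ hR₂
  have hTT : ⟪(-T : E3), T⟫ = (-1 : ℝ) := by
    rw [inner_neg_left, real_inner_self_eq_norm_sq, hT]; norm_num
  have hpi : Real.arccos ⟪(-T : E3), T⟫ = Real.pi := by
    rw [hTT, Real.arccos_neg_one]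
  linarith
end
end

section
/- Cone isometry: let a ∈ ℝ² and A ∈ ℝ³, and let x : (0,ℓ₀) → ℝ², X : (0,ℓ₀) → ℝ³ be arclength-parameterized C¹ curves with ‖x(s) − a‖ = ‖X(s) − A‖ = L(s) > 0 for all s. Define r(s) = (x(s) − a)/L(s), R(s) = (X(s) − A)/L(s). Then for any C¹ curve (s(t), ℓ(t)) with ℓ(t) > 0, the curves y(t) = a + ℓ(t) r(s(t)) in ℝ² and Y(t) = A + ℓ(t) R(s(t)) in ℝ³ satisfy ‖y'(t)‖ = ‖Y'(t)‖ for all t; both squared speeds equal (ℓ²/L²)(1 − (L')²)(s')² + (ℓ')². -/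
noncomputable section
open scoped RealInnerProductSpace
open Set

lemma cone_speed_sq {F : Type*} [NormedAddCommGroup F] [InnerProductSpace ℝ F]
    (ℓ₀ : ℝ) (a : F) (x : ℝ → F) (L : ℝ → ℝ)
    (hx : ∀ s ∈ Ioo 0 ℓ₀, DifferentiableAt ℝ x s)
    (hL : ∀ s ∈ Ioo 0 ℓ₀, DifferentiableAt ℝ L s)
    (harcx : ∀ s ∈ Ioo 0 ℓ₀, ‖deriv x s‖ = 1)
    (hLx : ∀ s ∈ Ioo 0 ℓ₀, ‖x s - a‖ = L s)
    (hLpos : ∀ s ∈ Ioo 0 ℓ₀, 0 < L s)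
    (σ lam : ℝ → ℝ) (t : ℝ)
    (hσ : DifferentiableAt ℝ σ t) (hlam : DifferentiableAt ℝ lam t)
    (hmem : σ t ∈ Ioo 0 ℓ₀) :
    ‖deriv (fun τ => a + lam τ • ((L (σ τ))⁻¹ • (x (σ τ) - a))) t‖ ^ 2 =
      (lam t ^ 2 / L (σ t) ^ 2) * (1 - deriv L (σ t) ^ 2) * deriv σ t ^ 2
        + deriv lam t ^ 2 := by
  set s₀ := σ t with hs₀
  have hLne : L s₀ ≠ 0 := (hLpos _ hmem).ne'
  have hxd : HasDerivAt x (deriv x s₀) s₀ := (hx _ hmem).hasDerivAt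
  have hLd : HasDerivAt L (deriv L s₀) s₀ := (hL _ hmem).hasDerivAt
  have hσd : HasDerivAt σ (deriv σ t) t := hσ.hasDerivAt
  have hlamd : HasDerivAt lam (deriv lam t) t := hlam.hasDerivAt
  -- key inner product fact: ⟪x s₀ - a, x' s₀⟫ = L s₀ * L' s₀
  have hinner : ⟪x s₀ - a, deriv x s₀⟫ = L s₀ * deriv L s₀ := by
    have h1 : HasDerivAt (fun s => ⟪x s - a, x s - a⟫)
        (⟪x s₀ - a, deriv x s₀⟫ + ⟪deriv x s₀, x s₀ - a⟫) s₀ :=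
      HasDerivAt.inner ℝ (hxd.sub_const a) (hxd.sub_const a)
    have h2 : HasDerivAt (fun s => L s * L s)
        (deriv L s₀ * L s₀ + L s₀ * deriv L s₀) s₀ := hLd.mul hLd
    have heq : (fun s => ⟪x s - a, x s - a⟫) =ᶠ[nhds s₀] (fun s => L s * L s) := by
      filter_upwards [isOpen_Ioo.mem_nhds hmem] with s hs
      rw [real_inner_self_eq_norm_mul_norm, hLx s hs]
    have h1' := h2.congr_of_eventuallyEq heq
    have := h1.unique h1'
    have hcomm : ⟪x s₀ - a, deriv x s₀⟫ = ⟪deriv x s₀, x s₀ - a⟫ := real_inner_comm _ _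
    linarith
  -- derivative of the curve
  have hLσ : HasDerivAt (fun τ => L (σ τ)) (deriv L s₀ * deriv σ t) t := HasDerivAt.comp t (show HasDerivAt L (deriv L s₀) (σ t) from hLd) hσd
  have hc : HasDerivAt (fun τ => lam τ / L (σ τ))
      ((deriv lam t * L s₀ - lam t * (deriv L s₀ * deriv σ t)) / (L s₀) ^ 2) t :=
    hlamd.div hLσ hLne
  have hv : HasDerivAt (fun τ => x (σ τ) - a) (deriv σ t • deriv x s₀) t :=
    (HasDerivAt.scomp t (show HasDerivAt x (deriv x s₀) (σ t) from hxd) hσd).sub_const a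
  set c' := (deriv lam t * L s₀ - lam t * (deriv L s₀ * deriv σ t)) / (L s₀) ^ 2 with hc'
  have hg : HasDerivAt (fun τ => a + (lam τ / L (σ τ)) • (x (σ τ) - a))
      ((lam t / L s₀) • (deriv σ t • deriv x s₀) + c' • (x s₀ - a)) t :=
    (hc.smul hv).const_add a
  have hfun : (fun τ => a + lam τ • ((L (σ τ))⁻¹ • (x (σ τ) - a)))
      = fun τ => a + (lam τ / L (σ τ)) • (x (σ τ) - a) := by
    funext τ; rw [smul_smul, div_eq_mul_inv]
  rw [hfun, hg.deriv]
  have expand : ∀ (α β : ℝ) (u w : F), ‖α • u + β • w‖ ^ 2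
      = α ^ 2 * ‖u‖ ^ 2 + 2 * (α * β) * ⟪u, w⟫ + β ^ 2 * ‖w‖ ^ 2 := by
    intro α β u w
    rw [norm_add_sq_real, real_inner_smul_left, real_inner_smul_right]
    simp only [norm_smul, Real.norm_eq_abs, mul_pow, sq_abs]
    ring
  rw [smul_smul, expand]
  have hw : ‖deriv x s₀‖ = 1 := harcx _ hmem
  have hvn : ‖x s₀ - a‖ = L s₀ := hLx _ hmem
  have hiw : ⟪deriv x s₀, x s₀ - a⟫ = L s₀ * deriv L s₀ := by
    rw [real_inner_comm]; exact hinner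
  rw [hw, hvn, hiw, hc']
  field_simp
  ring

/-- cone isometry.  Matching crease arclengths and ruling lengths
on a cone makes corresponding curves y(t) = a + ℓ(t) r(s(t)) and
Y(t) = A + ℓ(t) R(s(t)) have equal speeds. -/
theorem cone_isometry (ℓ₀ : ℝ) (a : E2) (A : E3)
    (x : ℝ → E2) (X : ℝ → E3) (L : ℝ → ℝ)
    (hx : ∀ s ∈ Ioo 0 ℓ₀, DifferentiableAt ℝ x s)
    (hX : ∀ s ∈ Ioo 0 ℓ₀, DifferentiableAt ℝ X s)
    (hL : ∀ s ∈ Ioo 0 ℓ₀, DifferentiableAt ℝ L s)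
    (harcx : ∀ s ∈ Ioo 0 ℓ₀, ‖deriv x s‖ = 1)
    (harcX : ∀ s ∈ Ioo 0 ℓ₀, ‖deriv X s‖ = 1)
    (hLx : ∀ s ∈ Ioo 0 ℓ₀, ‖x s - a‖ = L s)
    (hLX : ∀ s ∈ Ioo 0 ℓ₀, ‖X s - A‖ = L s)
    (hLpos : ∀ s ∈ Ioo 0 ℓ₀, 0 < L s)
    (σ lam : ℝ → ℝ) (t : ℝ)
    (hσ : DifferentiableAt ℝ σ t) (hlam : DifferentiableAt ℝ lam t)
    (hmem : σ t ∈ Ioo 0 ℓ₀) (hlpos : 0 < lam t) :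
    ‖deriv (fun τ => a + lam τ • ((L (σ τ))⁻¹ • (x (σ τ) - a))) t‖ =
      ‖deriv (fun τ => A + lam τ • ((L (σ τ))⁻¹ • (X (σ τ) - A))) t‖ ∧
    ‖deriv (fun τ => a + lam τ • ((L (σ τ))⁻¹ • (x (σ τ) - a))) t‖ ^ 2 =
      (lam t ^ 2 / L (σ t) ^ 2) * (1 - deriv L (σ t) ^ 2) * deriv σ t ^ 2
        + deriv lam t ^ 2 ∧
    ‖deriv (fun τ => A + lam τ • ((L (σ τ))⁻¹ • (X (σ τ) - A))) t‖ ^ 2 =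
      (lam t ^ 2 / L (σ t) ^ 2) * (1 - deriv L (σ t) ^ 2) * deriv σ t ^ 2
        + deriv lam t ^ 2 := by
  have h2 := cone_speed_sq ℓ₀ a x L hx hL harcx hLx hLpos σ lam t hσ hlam hmem
  have h3 := cone_speed_sq ℓ₀ A X L hX hL harcX hLX hLpos σ lam t hσ hlam hmem
  refine ⟨?_, h2, h3⟩
  have := h2.trans h3.symm
  nlinarith [norm_nonneg (deriv (fun τ => a + lam τ • ((L (σ τ))⁻¹ • (x (σ τ) - a))) t),
    norm_nonneg (deriv (fun τ => A + lam τ • ((L (σ τ))⁻¹ • (X (σ τ) - A))) t)]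
end
end

section
/- Cylinder isometry: let r ∈ ℝ² and R ∈ ℝ³ be fixed unit vectors, let c : (0,ℓ₀) → ℝ² and C : (0,ℓ₀) → ℝ³ be C¹ curves with c'(s) ⬝ r = 0 and C'(s) ⬝ R = 0 for all s, and let L : (0,ℓ₀) → ℝ be C¹ such that x(s) = c(s) + L(s) r and X(s) = C(s) + L(s) R are both arclength-parameterized. Then for any C¹ path (s(t), ℓ(t)), the curves y(t) = c(s(t)) + ℓ(t) r and Y(t) = C(s(t)) + ℓ(t) R satisfy ‖y'(t)‖ = ‖Y'(t)‖; both squared speeds equal (1 − (L')²)(s')² + (ℓ')². -/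
noncomputable section
open scoped RealInnerProductSpace
open Set

lemma norm_sq_split {F : Type*} [NormedAddCommGroup F] [InnerProductSpace ℝ F]
    (r v : F) (hr : ‖r‖ = 1) (hv : ⟪v, r⟫ = 0) (b : ℝ) :
    ‖v + b • r‖ ^ 2 = ‖v‖ ^ 2 + b ^ 2 := by
  rw [norm_add_sq_real, real_inner_smul_right, hv, norm_smul, hr]
  simp [mul_pow, sq_abs]

lemma deriv_curve {F : Type*} [NormedAddCommGroup F] [InnerProductSpace ℝ F]
    (r : F) (c : ℝ → F) (σ lam : ℝ → ℝ) (t : ℝ)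
    (hc : DifferentiableAt ℝ c (σ t)) (hσ : DifferentiableAt ℝ σ t)
    (hlam : DifferentiableAt ℝ lam t) :
    deriv (fun τ => c (σ τ) + lam τ • r) t
      = deriv σ t • deriv c (σ t) + deriv lam t • r := by
  have h1 : HasDerivAt (fun τ => c (σ τ)) (deriv σ t • deriv c (σ t)) t :=
    hc.hasDerivAt.scomp t hσ.hasDerivAt
  have h2 : HasDerivAt (fun τ => lam τ • r) (deriv lam t • r) t :=
    hlam.hasDerivAt.smul_const r
  exact (h1.add h2).deriv

lemma base_speed_sq {F : Type*} [NormedAddCommGroup F] [InnerProductSpace ℝ F]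
    (r : F) (c : ℝ → F) (L : ℝ → ℝ) (s : ℝ) (hr : ‖r‖ = 1)
    (hc : DifferentiableAt ℝ c s) (hL : DifferentiableAt ℝ L s)
    (hcr : ⟪deriv c s, r⟫ = 0)
    (harc : ‖deriv (fun u => c u + L u • r) s‖ = 1) :
    ‖deriv c s‖ ^ 2 = 1 - deriv L s ^ 2 := by
  have hd : deriv (fun u => c u + L u • r) s = deriv c s + deriv L s • r :=
    (hc.hasDerivAt.add (hL.hasDerivAt.smul_const r)).deriv
  have := norm_sq_split r (deriv c s) hr hcr (deriv L s)
  rw [← hd, harc] at this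
  linarith

lemma curve_speed_sq {F : Type*} [NormedAddCommGroup F] [InnerProductSpace ℝ F]
    (r : F) (c : ℝ → F) (L : ℝ → ℝ) (σ lam : ℝ → ℝ) (t : ℝ) (hr : ‖r‖ = 1)
    (hc : DifferentiableAt ℝ c (σ t)) (hL : DifferentiableAt ℝ L (σ t))
    (hσ : DifferentiableAt ℝ σ t) (hlam : DifferentiableAt ℝ lam t)
    (hcr : ⟪deriv c (σ t), r⟫ = 0)
    (harc : ‖deriv (fun u => c u + L u • r) (σ t)‖ = 1) :
    ‖deriv (fun τ => c (σ τ) + lam τ • r) t‖ ^ 2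
      = (1 - deriv L (σ t) ^ 2) * deriv σ t ^ 2 + deriv lam t ^ 2 := by
  rw [deriv_curve r c σ lam t hc hσ hlam,
    norm_sq_split r _ hr (by rw [real_inner_smul_left, hcr, mul_zero]) _,
    norm_smul, mul_pow, base_speed_sq r c L (σ t) hr hc hL hcr harc]
  simp [sq_abs]; ring

/-- cylinder isometry.  With rulings along fixed unit directions
r and R perpendicular to the base curves, corresponding curves
y(t) = c(s(t)) + ℓ(t) r and Y(t) = C(s(t)) + ℓ(t) R have equal speeds. -/
theorem cylinder_isometry (ℓ₀ : ℝ) (r : E2) (R : E3)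
    (c : ℝ → E2) (C : ℝ → E3) (L : ℝ → ℝ)
    (hr : ‖r‖ = 1) (hR : ‖R‖ = 1)
    (hc : ∀ s ∈ Ioo 0 ℓ₀, DifferentiableAt ℝ c s)
    (hC : ∀ s ∈ Ioo 0 ℓ₀, DifferentiableAt ℝ C s)
    (hL : ∀ s ∈ Ioo 0 ℓ₀, DifferentiableAt ℝ L s)
    (hcr : ∀ s ∈ Ioo 0 ℓ₀, ⟪deriv c s, r⟫ = 0)
    (hCR : ∀ s ∈ Ioo 0 ℓ₀, ⟪deriv C s, R⟫ = 0)
    (harcx : ∀ s ∈ Ioo 0 ℓ₀, ‖deriv (fun u => c u + L u • r) s‖ = 1)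
    (harcX : ∀ s ∈ Ioo 0 ℓ₀, ‖deriv (fun u => C u + L u • R) s‖ = 1)
    (σ lam : ℝ → ℝ) (t : ℝ)
    (hσ : DifferentiableAt ℝ σ t) (hlam : DifferentiableAt ℝ lam t)
    (hmem : σ t ∈ Ioo 0 ℓ₀) :
    ‖deriv (fun τ => c (σ τ) + lam τ • r) t‖ =
      ‖deriv (fun τ => C (σ τ) + lam τ • R) t‖ ∧
    ‖deriv (fun τ => c (σ τ) + lam τ • r) t‖ ^ 2 =
      (1 - deriv L (σ t) ^ 2) * deriv σ t ^ 2 + deriv lam t ^ 2 ∧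
    ‖deriv (fun τ => C (σ τ) + lam τ • R) t‖ ^ 2 =
      (1 - deriv L (σ t) ^ 2) * deriv σ t ^ 2 + deriv lam t ^ 2 := by
  have h1 := curve_speed_sq r c L σ lam t hr (hc _ hmem) (hL _ hmem) hσ hlam
    (hcr _ hmem) (harcx _ hmem)
  have h2 := curve_speed_sq R C L σ lam t hR (hC _ hmem) (hL _ hmem) hσ hlam
    (hCR _ hmem) (harcX _ hmem)
  refine ⟨?_, h1, h2⟩
  have := h1.trans h2.symm
  exact (pow_left_inj₀ (norm_nonneg _) (norm_nonneg _) two_ne_zero).mp this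
end
end

section
/- Let ℓ : [0,1] → ℝ be C¹ and convex with ℓ ≥ 0, let u ∈ [0,1), v > 0, and suppose v/2 − (ℓ(t) + ℓ'(t)(u − t)) > 0 for all t ∈ (0,1) (the tangent line to the lens at t passes below the vertex (u, v/2)). Define h(t)² = (v − v*)((v + v*)/4 − ℓ(t)) + (t − u)² for a parameter v* ∈ (0, v). Then h'(t)² < 1 for all t ∈ (0,1) if and only if v − v* < 4[v/2 − (ℓ(t) + ℓ'(t)(u − t))] / [1 + ℓ'(t)²] for all t ∈ (0,1). -/
noncomputable section
open scoped RealInnerProductSpace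
open Set

/-- the trapezoid-height slope condition h'(t)² < 1 holds for all
t ∈ (0,1) iff v − v* is small enough relative to the tangent lines of the lens. -/
theorem lens_slope_condition (ℓ : ℝ → ℝ) (u v vs : ℝ) (h : ℝ → ℝ)
    (hℓC1 : ContDiffOn ℝ 1 ℓ (Icc 0 1))
    (hconv : ConvexOn ℝ (Icc 0 1) ℓ)
    (hℓ0 : ∀ t ∈ Icc 0 1, 0 ≤ ℓ t)
    (hu : u ∈ Ico (0:ℝ) 1) (hv : 0 < v)
    (htangent : ∀ t ∈ Ioo 0 1, 0 < v / 2 - (ℓ t + deriv ℓ t * (u - t)))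
    (hvs : vs ∈ Ioo 0 v)
    (hhdef : ∀ t ∈ Ioo 0 1,
      h t ^ 2 = (v - vs) * ((v + vs) / 4 - ℓ t) + (t - u) ^ 2)
    (hhpos : ∀ t ∈ Ioo 0 1, 0 < h t)
    (hhdiff : ∀ t ∈ Ioo 0 1, DifferentiableAt ℝ h t) :
    (∀ t ∈ Ioo 0 1, deriv h t ^ 2 < 1) ↔
    (∀ t ∈ Ioo 0 1,
      v - vs < 4 * (v / 2 - (ℓ t + deriv ℓ t * (u - t))) / (1 + deriv ℓ t ^ 2)) := by
  have key : ∀ t ∈ Ioo (0:ℝ) 1,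
      (deriv h t ^ 2 < 1 ↔
        v - vs < 4 * (v / 2 - (ℓ t + deriv ℓ t * (u - t))) / (1 + deriv ℓ t ^ 2)) := by
    intro t ht
    set L := deriv ℓ t with hLdef
    have hnhds : Icc (0:ℝ) 1 ∈ nhds t := Icc_mem_nhds ht.1 ht.2
    have hℓd : DifferentiableAt ℝ ℓ t := (hℓC1.contDiffAt hnhds).differentiableAt one_ne_zero
    have hN : 0 < v / 2 - (ℓ t + L * (u - t)) := htangent t ht
    have hA : 0 < v - vs := sub_pos.mpr hvs.2
    have hL2 : (0:ℝ) < 1 + L ^ 2 := by positivity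
    have heq : (fun s => h s ^ 2) =ᶠ[nhds t]
        fun s => (v - vs) * ((v + vs) / 4 - ℓ s) + (s - u) ^ 2 := by
      filter_upwards [isOpen_Ioo.mem_nhds ht] with s hs using hhdef s hs
    have hd1 : deriv (fun s => h s ^ 2) t = 2 * h t * deriv h t := by
      have : deriv (fun s => h s ^ 2) t = _ := ((hhdiff t ht).hasDerivAt.pow 2).deriv
      rw [this]; simp only [Nat.cast_ofNat, show (2:ℕ) - 1 = 1 from rfl, pow_one]
    have hd2 : deriv (fun s => (v - vs) * ((v + vs) / 4 - ℓ s) + (s - u) ^ 2) t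
        = (v - vs) * (0 - L) + 2 * (t - u) * 1 := by
      have h1 : HasDerivAt (fun s => (v - vs) * ((v + vs) / 4 - ℓ s) + (s - u) ^ 2)
          ((v - vs) * (0 - L) + (2 * (t - u) ^ 1 * 1)) t := by
        exact (((hasDerivAt_const t ((v+vs)/4)).sub hℓd.hasDerivAt).const_mul (v - vs)).add
          (((hasDerivAt_id t).sub_const u).pow 2)
      simpa using h1.deriv
    have hderiv : 2 * h t * deriv h t = (v - vs) * (0 - L) + 2 * (t - u) * 1 := by
      rw [← hd1, ← hd2]; exact heq.deriv_eq
    have hh := hhpos t ht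
    have hform : deriv h t = ((t - u) - (v - vs) * L / 2) / h t := by
      field_simp
      linarith [hderiv]
    rw [hform, div_pow, div_lt_one (by positivity), lt_div_iff₀ hL2]
    have hsq : h t ^ 2 - ((t - u) - (v - vs) * L / 2) ^ 2
        = (v - vs) / 4 * (4 * (v / 2 - (ℓ t + L * (u - t))) - (v - vs) * (1 + L ^ 2)) := by
      rw [hhdef t ht]; ring
    constructor
    · intro hlt; nlinarith
    · intro hlt; nlinarith
  exact ⟨fun H t ht => (key t ht).mp (H t ht), fun H t ht => (key t ht).mpr (H t ht)⟩
end
end
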